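/- Let L̂ be the degree-completion of the free Lie algebra on two generators x and y over ℚ (elements are formal series ∑_{n≥1} zₙ with zₙ of bracket-weight n). If z, z' ∈ L̂ both satisfy exp(ad_z) = exp(ad_x)∘exp(ad_y) and exp(ad_{z'}) = exp(ad_x)∘exp(ad_y) as linear endomorphisms of L̂, then z = z'. That is, there is at most one element of L̂ whose exponentiated adjoint action equals exp(ad_x)exp(ad_y). -/

import Mathlib

/-- Truncated exponential of the adjoint action `exp(ad_a)(u)` up to order `n`,
in the free Lie algebra on two generators over `ℚ`. Modulo the `n`-th step of the
lower central series (= weight) filtration this computes the honest exponential,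
since `ad` raises the filtration. -/
noncomputable def truncExpAd (a u : FreeLieAlgebra ℚ (Fin 2)) (n : ℕ) :
    FreeLieAlgebra ℚ (Fin 2) :=
  ∑ j ∈ Finset.range (n + 1), ((j.factorial : ℚ)⁻¹) •
    ((LieAlgebra.ad ℚ (FreeLieAlgebra ℚ (Fin 2)) a ^ j) u)

/-- The weight (lower central series) filtration on the free Lie algebra on two
generators over `ℚ`; its inverse limit is the degree completion `L̂`. -/
noncomputable def lcsF (n : ℕ) : Submodule ℚ (FreeLieAlgebra ℚ (Fin 2)) :=
  (LieModule.lowerCentralSeries ℚ (FreeLieAlgebra ℚ (Fin 2)) (FreeLieAlgebra ℚ (Fin 2)) n).toSubmodule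

namespace BCHAux

abbrev L := FreeLieAlgebra ℚ (Fin 2)

theorem freeLie_induction {p : L → Prop}
    (hof : ∀ i, p (FreeLieAlgebra.of ℚ i))
    (hadd : ∀ a b, p a → p b → p (a + b))
    (hsmul : ∀ (c : ℚ) a, p a → p (c • a))
    (hbr : ∀ a b, p a → p b → p ⁅a, b⁆) : ∀ a, p a := by
  have h0 : p 0 := by simpa using hsmul 0 (FreeLieAlgebra.of ℚ 0) (hof 0)
  let S : LieSubalgebra ℚ L :=
    { carrier := {x | p x}
      add_mem' := fun ha hb => hadd _ _ ha hb
      zero_mem' := h0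
      smul_mem' := fun c a ha => hsmul c a ha
      lie_mem' := fun ha hb => hbr _ _ ha hb }
  intro a
  let f : L →ₗ⁅ℚ⁆ S := FreeLieAlgebra.lift ℚ (fun i => (⟨FreeLieAlgebra.of ℚ i, hof i⟩ : S))
  have key : S.incl.comp f = LieHom.id := by
    apply FreeLieAlgebra.hom_ext
    intro i
    simp [f, FreeLieAlgebra.lift_of_apply, LieSubalgebra.coe_incl]
  have : S.incl (f a) = a := by
    have := DFunLike.congr_fun key a
    simpa using this
  rw [← this]
  exact (f a).2

theorem lcsF_zero_mem (a : L) : a ∈ lcsF 0 := by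
  simp [lcsF]

theorem lcsF_succ_mem {n : ℕ} {a : L} (u : L) (ha : a ∈ lcsF n) : ⁅u, a⁆ ∈ lcsF (n + 1) := by
  rw [lcsF, LieModule.lowerCentralSeries_succ]
  exact LieSubmodule.lie_mem_lie (LieSubmodule.mem_top u) ha

theorem lcsF_antitone {m n : ℕ} (h : m ≤ n) : lcsF n ≤ lcsF m := by
  intro a ha
  exact LieModule.antitone_lowerCentralSeries ℚ L L h ha

/-- span-induction principle for `lcsF (n+1)`. -/
theorem lcsF_succ_induction {n : ℕ} {p : L → Prop} {a : L} (ha : a ∈ lcsF (n + 1))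
    (hgen : ∀ (x : L) (v : L), v ∈ lcsF n → p ⁅x, v⁆)
    (h0 : p 0)
    (hadd : ∀ b c, p b → p c → p (b + c))
    (hsmul : ∀ (q : ℚ) b, p b → p (q • b)) : p a := by
  rw [lcsF, LieModule.lowerCentralSeries_succ] at ha
  rw [LieSubmodule.mem_toSubmodule, ← LieSubmodule.mem_toSubmodule,
    LieSubmodule.lieIdeal_oper_eq_linear_span'] at ha
  refine Submodule.span_induction ?_ h0 (fun b c _ _ hb hc => hadd b c hb hc)
    (fun q b _ hb => hsmul q b hb) ha
  rintro m ⟨x, -, v, hv, rfl⟩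
  exact hgen x v hv

theorem lcsF_bracket : ∀ (j k : ℕ) (a b : L), a ∈ lcsF j → b ∈ lcsF k →
    ⁅a, b⁆ ∈ lcsF (j + k + 1) := by
  intro j
  induction j with
  | zero => intro k a b _ hb; simpa using lcsF_succ_mem a hb
  | succ j ih =>
    intro k a b ha hb
    refine lcsF_succ_induction ha (p := fun a => ⁅a, b⁆ ∈ lcsF (j + 1 + k + 1)) ?_ ?_ ?_ ?_
    · intro x v hv
      have h1 : ⁅x, ⁅v, b⁆⁆ ∈ lcsF (j + k + 1 + 1) := lcsF_succ_mem x (ih k v b hv hb)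
      have h2 : ⁅v, ⁅x, b⁆⁆ ∈ lcsF (j + (k + 1) + 1) :=
        ih (k + 1) v ⁅x, b⁆ hv (lcsF_succ_mem x hb)
      have : ⁅(⁅x, v⁆ : L), b⁆ = ⁅x, ⁅v, b⁆⁆ - ⁅v, ⁅x, b⁆⁆ := by
        rw [lie_lie]
      rw [this]
      have e1 : j + k + 1 + 1 = j + 1 + k + 1 := by omega
      have e2 : j + (k + 1) + 1 = j + 1 + k + 1 := by omega
      rw [e1] at h1; rw [e2] at h2
      exact Submodule.sub_mem _ h1 h2
    · simp
    · intro c d hc hd; rw [add_lie]; exact Submodule.add_mem _ hc hd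
    · intro q c hc; rw [smul_lie]; exact Submodule.smul_mem _ q hc



abbrev M := MonoidAlgebra ℚ (FreeMonoid (Fin 2))

noncomputable instance : LieRing M := LieRing.ofAssociativeRing

noncomputable instance : CoeFun M (fun _ => FreeMonoid (Fin 2) → ℚ) := ⟨fun t => t.coeff⟩

noncomputable def X (i : Fin 2) : M := MonoidAlgebra.single (FreeMonoid.of i) 1

/-- The Lie algebra map from the free Lie algebra to the free associative algebra
(realized as the monoid algebra on the free monoid). -/
noncomputable def τ : L →ₗ⁅ℚ⁆ M := FreeLieAlgebra.lift ℚ (fun i => X i)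

theorem τ_of (i : Fin 2) : τ (FreeLieAlgebra.of ℚ i) = X i := FreeLieAlgebra.lift_of_apply _ _

theorem τ_bracket (a b : L) : τ ⁅a, b⁆ = τ a * τ b - τ b * τ a := by
  rw [LieHom.map_lie]; rfl

/-- left-normed bracketing of a word -/
noncomputable def brkt (w : FreeMonoid (Fin 2)) : L :=
  match FreeMonoid.toList w with
  | [] => 0
  | i :: rest => List.foldl (fun acc j => ⁅acc, FreeLieAlgebra.of ℚ j⁆) (FreeLieAlgebra.of ℚ i) rest

theorem brkt_one : brkt 1 = 0 := rfl

theorem brkt_of (i : Fin 2) : brkt (FreeMonoid.of i) = FreeLieAlgebra.of ℚ i := rfl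

theorem brkt_mul_of {w : FreeMonoid (Fin 2)} (hw : w ≠ 1) (i : Fin 2) :
    brkt (w * FreeMonoid.of i) = ⁅brkt w, FreeLieAlgebra.of ℚ i⁆ := by
  have hl : FreeMonoid.toList w ≠ [] := by
    intro h
    exact hw (FreeMonoid.toList.injective (by simpa using h))
  obtain ⟨j, rest, hjr⟩ := List.exists_cons_of_ne_nil hl
  have hmul : FreeMonoid.toList (w * FreeMonoid.of i) = j :: (rest ++ [i]) := by
    rw [FreeMonoid.toList_mul, hjr]; rfl
  simp only [brkt, hmul, hjr, List.foldl_append, List.foldl_cons, List.foldl_nil]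

noncomputable def β : M →ₗ[ℚ] L :=
  Finsupp.linearCombination ℚ brkt ∘ₗ (MonoidAlgebra.coeffLinearEquiv ℚ).toLinearMap

theorem β_single (w : FreeMonoid (Fin 2)) (c : ℚ) :
    β (MonoidAlgebra.single w c) = c • brkt w := Finsupp.linearCombination_single _ _ _

/-- words of length `< m` have zero coefficient -/
noncomputable def W (m : ℕ) : Submodule ℚ M where
  carrier := {t | ∀ w : FreeMonoid (Fin 2), (FreeMonoid.toList w).length < m → t w = 0}
  add_mem' := by
    intro a b ha hb w hw
    rw [MonoidAlgebra.coeff_add, Finsupp.add_apply, ha w hw, hb w hw, add_zero]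
  zero_mem' := by intro w _; rfl
  smul_mem' := by
    intro c t ht w hw
    rw [MonoidAlgebra.coeff_smul, Finsupp.smul_apply, ht w hw, smul_zero]

/-- words of length `≠ m` have zero coefficient -/
noncomputable def E (m : ℕ) : Submodule ℚ M where
  carrier := {t | ∀ w : FreeMonoid (Fin 2), (FreeMonoid.toList w).length ≠ m → t w = 0}
  add_mem' := by
    intro a b ha hb w hw
    rw [MonoidAlgebra.coeff_add, Finsupp.add_apply, ha w hw, hb w hw, add_zero]
  zero_mem' := by intro w _; rfl
  smul_mem' := by
    intro c t ht w hw
    rw [MonoidAlgebra.coeff_smul, Finsupp.smul_apply, ht w hw, smul_zero]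

theorem mul_apply_eq_zero {s t : M} {w : FreeMonoid (Fin 2)}
    (h : ∀ u v : FreeMonoid (Fin 2), u * v = w → s u = 0 ∨ t v = 0) : (s * t) w = 0 := by
  classical
  rw [MonoidAlgebra.coeff_mul]
  refine Finset.sum_eq_zero ?_
  intro u hu
  refine Finset.sum_eq_zero ?_
  intro v hv
  show (if u * v = w then s u * t v else 0) = 0
  split_ifs with huv
  · rcases h u v huv with h0 | h0
    · rw [h0, zero_mul]
    · rw [h0, mul_zero]
  · rfl

theorem W_mul {j k : ℕ} {s t : M} (hs : s ∈ W j) (ht : t ∈ W k) : s * t ∈ W (j + k) := by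
  intro w hw
  refine mul_apply_eq_zero ?_
  intro u v huv
  have hlen : (FreeMonoid.toList u).length + (FreeMonoid.toList v).length
      = (FreeMonoid.toList w).length := by
    rw [← huv, FreeMonoid.toList_mul, List.length_append]
  by_cases hj : (FreeMonoid.toList u).length < j
  · exact Or.inl (hs u hj)
  · exact Or.inr (ht v (by omega))

theorem E_mul {j k : ℕ} {s t : M} (hs : s ∈ E j) (ht : t ∈ E k) : s * t ∈ E (j + k) := by
  intro w hw
  refine mul_apply_eq_zero ?_
  intro u v huv
  have hlen : (FreeMonoid.toList u).length + (FreeMonoid.toList v).length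
      = (FreeMonoid.toList w).length := by
    rw [← huv, FreeMonoid.toList_mul, List.length_append]
  by_cases hj : (FreeMonoid.toList u).length = j
  · exact Or.inr (ht v (by omega))
  · exact Or.inl (hs u hj)

theorem E_W_eq_zero {k : ℕ} {t : M} (hE : t ∈ E k) (hW : t ∈ W (k + 1)) : t = 0 := by
  ext w
  by_cases h : (FreeMonoid.toList w).length = k
  · exact hW w (by omega)
  · exact hE w h

theorem X_mem_W1 (i : Fin 2) : X i ∈ W 1 := by
  classical
  intro w hw
  rw [X, MonoidAlgebra.coeff_single, Finsupp.single_apply]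
  split_ifs with h
  · subst h; simp [FreeMonoid.toList_of] at hw
  · rfl

theorem X_mem_E1 (i : Fin 2) : X i ∈ E 1 := by
  classical
  intro w hw
  rw [X, MonoidAlgebra.coeff_single, Finsupp.single_apply]
  split_ifs with h
  · subst h; simp [FreeMonoid.toList_of] at hw
  · rfl


theorem W_antitone {m n : ℕ} (h : m ≤ n) : W n ≤ W m := by
  intro t ht w hw
  exact ht w (lt_of_lt_of_le hw h)

theorem τ_mem_W1 : ∀ a : L, τ a ∈ W 1 := by
  refine freeLie_induction (fun i => by rw [τ_of]; exact X_mem_W1 i) ?_ ?_ ?_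
  · intro a b ha hb; rw [map_add]; exact Submodule.add_mem _ ha hb
  · intro c a ha; rw [map_smul]; exact Submodule.smul_mem _ c ha
  · intro a b ha hb
    rw [τ_bracket]
    have h1 : τ a * τ b ∈ W 2 := W_mul ha hb
    have h2 : τ b * τ a ∈ W 2 := W_mul hb ha
    exact Submodule.sub_mem _ (W_antitone (by omega) h1) (W_antitone (by omega) h2)

theorem τ_apply_one (a : L) : τ a 1 = 0 :=
  τ_mem_W1 a 1 (by simp [FreeMonoid.toList_one])

theorem mul_τ_apply_one (t : M) (a : L) : (t * τ a) 1 = 0 := by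
  refine mul_apply_eq_zero ?_
  intro u v huv
  have hv : v = 1 := by
    have : FreeMonoid.toList u ++ FreeMonoid.toList v = [] := by
      rw [← FreeMonoid.toList_mul, huv]; rfl
    have := List.append_eq_nil_iff.mp this
    exact FreeMonoid.toList.injective (by simpa using this.2)
  subst hv
  exact Or.inr (τ_apply_one a)

theorem β_X (i : Fin 2) : β (X i) = FreeLieAlgebra.of ℚ i := by
  show β (MonoidAlgebra.single (FreeMonoid.of i) 1) = _
  rw [β_single, brkt_of, one_smul]

theorem key_beta : ∀ a : L, ∀ t : M, β (t * τ a) = ⁅β t, a⁆ + (t 1) • β (τ a) := by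
  classical
  refine freeLie_induction ?_ ?_ ?_ ?_
  · -- a = of i
    intro i t
    rw [τ_of]
    induction t using MonoidAlgebra.induction_linear with
    | zero => simp
    | add f g hf hg =>
      rw [add_mul, map_add, hf, hg, map_add, add_lie, MonoidAlgebra.coeff_add, Finsupp.add_apply, add_smul]
      abel
    | single w c =>
      show β ((MonoidAlgebra.single w c : M) * MonoidAlgebra.single (FreeMonoid.of i) 1) = _
      rw [MonoidAlgebra.single_mul_single, mul_one]
      by_cases hw : w = 1
      · subst hw
        rw [one_mul, β_single, β_single, brkt_of, brkt_one, β_X, MonoidAlgebra.coeff_single, Finsupp.single_eq_same]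
        simp
      · rw [β_single, brkt_mul_of hw, β_single, β_X]
        rw [MonoidAlgebra.coeff_single, Finsupp.single_apply, if_neg hw]
        simp [lie_smul, smul_lie]
  · -- add
    intro a b ha hb t
    rw [map_add, mul_add, map_add, ha, hb, lie_add, map_add, smul_add]
    abel
  · -- smul
    intro c a ha t
    rw [map_smul, mul_smul_comm, map_smul, ha, lie_smul, smul_add, map_smul, smul_comm c]
  · -- bracket
    intro b c hb hc t
    have hβbc : β (τ ⁅b, c⁆) = ⁅β (τ b), c⁆ + ⁅b, β (τ c)⁆ := by
      rw [τ_bracket, map_sub, hc (τ b), hb (τ c), τ_apply_one, τ_apply_one]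
      simp only [zero_smul, add_zero]
      rw [sub_eq_add_neg, lie_skew]
    rw [τ_bracket, mul_sub, map_sub, ← mul_assoc, ← mul_assoc, hc (t * τ b), hb (t * τ c),
      mul_τ_apply_one, mul_τ_apply_one, hb t, hc t, ← τ_bracket, hβbc]
    simp only [zero_smul, add_zero, add_lie, smul_lie, smul_add]
    rw [leibniz_lie (β t) b c, ← lie_skew b ⁅β t, c⁆, ← lie_skew b (β (τ c))]
    simp only [smul_neg]
    abel

noncomputable def θ (a : L) : L := β (τ a)

theorem θ_deriv (a b : L) : θ ⁅a, b⁆ = ⁅θ a, b⁆ + ⁅a, θ b⁆ := by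
  unfold θ
  rw [τ_bracket, map_sub, key_beta b (τ a), key_beta a (τ b), τ_apply_one, τ_apply_one]
  simp only [zero_smul, add_zero]
  rw [sub_eq_add_neg, lie_skew]

theorem θ_of (i : Fin 2) : θ (FreeLieAlgebra.of ℚ i) = FreeLieAlgebra.of ℚ i := by
  unfold θ
  rw [τ_of]
  show β (MonoidAlgebra.single (FreeMonoid.of i) 1) = _
  rw [β_single, brkt_of, one_smul]

theorem θ_add (a b : L) : θ (a + b) = θ a + θ b := by
  unfold θ; rw [map_add, map_add]

theorem θ_smul (c : ℚ) (a : L) : θ (c • a) = c • θ a := by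
  unfold θ; rw [map_smul, map_smul]

theorem θ_zero : θ 0 = 0 := by
  unfold θ; rw [map_zero, map_zero]

/-- bracket monomials of weight `k` -/
inductive IsBM : ℕ → L → Prop
  | of (i : Fin 2) : IsBM 1 (FreeLieAlgebra.of ℚ i)
  | brk {j k : ℕ} {a b : L} : IsBM j a → IsBM k b → IsBM (j + k) ⁅a, b⁆

noncomputable def H (k : ℕ) : Submodule ℚ L := Submodule.span ℚ {a | IsBM k a}

theorem IsBM.pos {k : ℕ} {a : L} (h : IsBM k a) : 1 ≤ k := by
  induction h with
  | of => exact le_refl 1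
  | brk ha hb iha ihb => omega

theorem θ_BM {k : ℕ} {a : L} (h : IsBM k a) : θ a = (k : ℚ) • a := by
  induction h with
  | of i => rw [θ_of]; simp
  | brk ha hb iha ihb =>
    rename_i j k a b
    rw [θ_deriv, iha, ihb, smul_lie, lie_smul]
    push_cast
    rw [add_smul]

theorem θ_H {k : ℕ} {h : L} (hh : h ∈ H k) : θ h = (k : ℚ) • h := by
  refine Submodule.span_induction (fun a ha => θ_BM ha) ?_ ?_ ?_ hh
  · rw [θ_zero, smul_zero]
  · intro a b _ _ ha hb; rw [θ_add, ha, hb, smul_add]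
  · intro c a _ ha; rw [θ_smul, ha, smul_comm]

theorem τ_BM_E {k : ℕ} {a : L} (h : IsBM k a) : τ a ∈ E k := by
  induction h with
  | of i => rw [τ_of]; exact X_mem_E1 i
  | brk ha hb iha ihb =>
    rw [τ_bracket]
    exact Submodule.sub_mem _ (E_mul iha ihb) (by rw [Nat.add_comm]; exact E_mul ihb iha)

theorem τ_H_E {k : ℕ} {h : L} (hh : h ∈ H k) : τ h ∈ E k := by
  refine Submodule.span_induction (fun a ha => τ_BM_E ha) ?_ ?_ ?_ hh
  · rw [map_zero]; exact Submodule.zero_mem _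
  · intro a b _ _ ha hb; rw [map_add]; exact Submodule.add_mem _ ha hb
  · intro c a _ ha; rw [map_smul]; exact Submodule.smul_mem _ c ha

theorem BM_lcsF {k : ℕ} {a : L} (h : IsBM k a) : a ∈ lcsF (k - 1) := by
  induction h with
  | of i => exact lcsF_zero_mem _
  | brk ha hb iha ihb =>
    rename_i j k a b
    have := lcsF_bracket (j - 1) (k - 1) a b iha ihb
    have e : j - 1 + (k - 1) + 1 = j + k - 1 := by
      have := ha.pos; have := hb.pos; omega
    rwa [e] at this

theorem H_lcsF {k : ℕ} {h : L} (hh : h ∈ H k) : h ∈ lcsF (k - 1) := by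
  refine Submodule.span_induction (fun a ha => BM_lcsF ha) ?_ ?_ ?_ hh
  · exact Submodule.zero_mem _
  · intro a b _ _ ha hb; exact Submodule.add_mem _ ha hb
  · intro c a _ ha; exact Submodule.smul_mem _ c ha

theorem H_bracket {j k : ℕ} {a b : L} (ha : a ∈ H j) (hb : b ∈ H k) : ⁅a, b⁆ ∈ H (j + k) := by
  refine Submodule.span_induction (p := fun a _ => ⁅a, b⁆ ∈ H (j + k)) ?_ ?_ ?_ ?_ ha
  · intro x hx
    refine Submodule.span_induction (p := fun b _ => ⁅x, b⁆ ∈ H (j + k)) ?_ ?_ ?_ ?_ hb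
    · intro y hy; exact Submodule.subset_span (IsBM.brk hx hy)
    · simp only [lie_zero]; exact Submodule.zero_mem _
    · intro y z _ _ hy hz; simp only [lie_add]; exact Submodule.add_mem _ hy hz
    · intro c y _ hy; simp only [lie_smul]; exact Submodule.smul_mem _ c hy
  · simp only [zero_lie]; exact Submodule.zero_mem _
  · intro x y _ _ hx hy; simp only [add_lie]; exact Submodule.add_mem _ hx hy
  · intro c x _ hx; simp only [smul_lie]; exact Submodule.smul_mem _ c hx

theorem decomp0 (d : L) : ∃ h, h ∈ H 1 ∧ d - h ∈ lcsF 1 := by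
  refine freeLie_induction (p := fun d => ∃ h, h ∈ H 1 ∧ d - h ∈ lcsF 1) ?_ ?_ ?_ ?_ d
  · intro i
    exact ⟨FreeLieAlgebra.of ℚ i, Submodule.subset_span (IsBM.of i),
      by rw [sub_self]; exact Submodule.zero_mem _⟩
  · rintro a b ⟨ha, haH, har⟩ ⟨hb, hbH, hbr⟩
    refine ⟨ha + hb, Submodule.add_mem _ haH hbH, ?_⟩
    have : a + b - (ha + hb) = a - ha + (b - hb) := by abel
    rw [this]; exact Submodule.add_mem _ har hbr
  · rintro c a ⟨ha, haH, har⟩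
    refine ⟨c • ha, Submodule.smul_mem _ c haH, ?_⟩
    rw [← smul_sub]; exact Submodule.smul_mem _ c har
  · rintro a b _ _
    refine ⟨0, Submodule.zero_mem _, ?_⟩
    rw [sub_zero]
    have : lcsF 1 = (⁅(⊤ : LieIdeal ℚ L), (⊤ : LieSubmodule ℚ L L)⁆ : LieSubmodule ℚ L L).toSubmodule := by
      rw [lcsF, LieModule.lowerCentralSeries_succ, LieModule.lowerCentralSeries_zero]
    rw [this]
    exact LieSubmodule.lie_mem_lie (LieSubmodule.mem_top a) (LieSubmodule.mem_top b)

theorem decomp : ∀ (n : ℕ) (d : L), d ∈ lcsF n → ∃ h, h ∈ H (n + 1) ∧ d - h ∈ lcsF (n + 1) := by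
  intro n
  induction n with
  | zero => intro d _; exact decomp0 d
  | succ n ih =>
    intro d hd
    refine lcsF_succ_induction hd
      (p := fun d => ∃ h, h ∈ H (n + 2) ∧ d - h ∈ lcsF (n + 2)) ?_ ?_ ?_ ?_
    · intro x v hv
      obtain ⟨hv', hvH, hvr⟩ := ih v hv
      obtain ⟨hx, hxH, hxr⟩ := decomp0 x
      have hbrH : ⁅hx, hv'⁆ ∈ H (n + 2) := by
        have := H_bracket hxH hvH
        rwa [show 1 + (n + 1) = n + 2 by omega] at this
      refine ⟨⁅hx, hv'⁆, hbrH, ?_⟩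
      have e : ⁅x, v⁆ - ⁅hx, hv'⁆ = ⁅x - hx, v⁆ + ⁅hx, v - hv'⁆ := by
        rw [sub_lie, lie_sub]; abel
      rw [e]
      refine Submodule.add_mem _ ?_ (lcsF_succ_mem hx hvr)
      have := lcsF_bracket 1 n (x - hx) v hxr hv
      have e2 : 1 + n + 1 = n + 2 := by omega
      rwa [e2] at this
    · exact ⟨0, Submodule.zero_mem _, by rw [sub_zero]; exact Submodule.zero_mem _⟩
    · rintro a b ⟨ha, haH, har⟩ ⟨hb, hbH, hbr⟩
      refine ⟨ha + hb, Submodule.add_mem _ haH hbH, ?_⟩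
      have : a + b - (ha + hb) = a - ha + (b - hb) := by abel
      rw [this]; exact Submodule.add_mem _ har hbr
    · rintro c a ⟨ha, haH, har⟩
      refine ⟨c • ha, Submodule.smul_mem _ c haH, ?_⟩
      rw [← smul_sub]; exact Submodule.smul_mem _ c har

theorem τ_lcsF_W : ∀ (m : ℕ) (d : L), d ∈ lcsF m → τ d ∈ W (m + 1) := by
  intro m
  induction m with
  | zero => intro d _; exact τ_mem_W1 d
  | succ m ih =>
    intro d hd
    refine lcsF_succ_induction hd (p := fun d => τ d ∈ W (m + 2)) ?_ ?_ ?_ ?_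
    · intro x v hv
      rw [τ_bracket]
      have h1 : τ x * τ v ∈ W (1 + (m + 1)) := W_mul (τ_mem_W1 x) (ih v hv)
      have h2 : τ v * τ x ∈ W (m + 1 + 1) := W_mul (ih v hv) (τ_mem_W1 x)
      refine Submodule.sub_mem _ (W_antitone (by omega) h1) (W_antitone (by omega) h2)
    · simp only [map_zero]; exact Submodule.zero_mem _
    · intro a b ha hb; simp only [map_add]; exact Submodule.add_mem _ ha hb
    · intro c a ha; simp only [map_smul]; exact Submodule.smul_mem _ c ha

theorem center_coeff {t : M} (hc : ∀ i : Fin 2, t * X i = X i * t)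
    {w : FreeMonoid (Fin 2)} (hw : w ≠ 1) : t w = 0 := by
  have hl : FreeMonoid.toList w ≠ [] := fun h => hw (FreeMonoid.toList.injective (by simpa using h))
  obtain ⟨j, rest, hjr⟩ := List.exists_cons_of_ne_nil hl
  have hij0 : (if j = (0 : Fin 2) then (1 : Fin 2) else 0) ≠ j := by
    by_cases h : j = 0
    · rw [if_pos h, h]; decide
    · rw [if_neg h]; exact fun h0 => h h0.symm
  set i : Fin 2 := if j = 0 then 1 else 0 with hi
  have hij : i ≠ j := hij0
  have hr : (t * X i) (w * FreeMonoid.of i) = t w := by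
    rw [X, MonoidAlgebra.coeff_mul_single_eq_coeff_mul _ (fun a _ => mul_left_inj _), mul_one]
  have hlft : (X i * t) (w * FreeMonoid.of i) = 0 := by
    rw [X]
    apply MonoidAlgebra.single_mul_apply_of_not_exists_mul
    rintro ⟨dd, hd⟩
    have h2 := congrArg FreeMonoid.toList hd
    rw [FreeMonoid.toList_mul, FreeMonoid.toList_mul, FreeMonoid.toList_of, hjr] at h2
    simp at h2
    exact hij (h2.1.symm)
  rw [hc i, hlft] at hr
  exact hr.symm

theorem key_lemma {n : ℕ} {d : L} (hd : d ∈ lcsF n)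
    (hbr : ∀ i : Fin 2, ⁅d, FreeLieAlgebra.of ℚ i⁆ ∈ lcsF (n + 2)) : d ∈ lcsF (n + 1) := by
  obtain ⟨h, hH, hrem⟩ := decomp n d hd
  have hbz : ∀ i : Fin 2, ⁅h, FreeLieAlgebra.of ℚ i⁆ = 0 := by
    intro i
    have h1 : ⁅h, FreeLieAlgebra.of ℚ i⁆ ∈ H (n + 2) := by
      have := H_bracket hH (Submodule.subset_span (IsBM.of i))
      rwa [show n + 1 + 1 = n + 2 from rfl] at this
    have h2 : ⁅h, FreeLieAlgebra.of ℚ i⁆ ∈ lcsF (n + 2) := by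
      have hdh : ⁅d - h, FreeLieAlgebra.of ℚ i⁆ ∈ lcsF (n + 2) := by
        have := lcsF_succ_mem (FreeLieAlgebra.of ℚ i) hrem
        have e : -⁅FreeLieAlgebra.of ℚ i, d - h⁆ = ⁅d - h, FreeLieAlgebra.of ℚ i⁆ :=
          lie_skew _ _
        rw [← e]
        exact Submodule.neg_mem _ this
      have e : ⁅h, FreeLieAlgebra.of ℚ i⁆
          = ⁅d, FreeLieAlgebra.of ℚ i⁆ - ⁅d - h, FreeLieAlgebra.of ℚ i⁆ := by
        rw [sub_lie]; abel
      rw [e]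
      exact Submodule.sub_mem _ (hbr i) hdh
    have hτ0 : τ ⁅h, FreeLieAlgebra.of ℚ i⁆ = 0 :=
      E_W_eq_zero (τ_H_E h1) (τ_lcsF_W (n + 2) _ h2)
    have hθ0 : θ ⁅h, FreeLieAlgebra.of ℚ i⁆ = 0 := by unfold θ; rw [hτ0, map_zero]
    have := θ_H h1
    rw [hθ0] at this
    have hne : ((n + 2 : ℕ) : ℚ) ≠ 0 := by positivity
    have := (smul_eq_zero.mp this.symm).resolve_left hne
    exact this
  have hcomm : ∀ i : Fin 2, τ h * X i = X i * τ h := by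
    intro i
    have := τ_bracket h (FreeLieAlgebra.of ℚ i)
    rw [hbz i, map_zero, τ_of] at this
    exact sub_eq_zero.mp this.symm
  have hτh : τ h = 0 := by
    ext w
    show τ h w = (0 : M) w
    by_cases hw : w = 1
    · subst hw
      rw [τ_H_E hH 1 (by simp [FreeMonoid.toList_one])]
      rfl
    · rw [center_coeff hcomm hw]; rfl
  have hθh : θ h = 0 := by unfold θ; rw [hτh, map_zero]
  have := θ_H hH
  rw [hθh] at this
  have hne : ((n + 1 : ℕ) : ℚ) ≠ 0 := by positivity
  have hz : h = 0 := (smul_eq_zero.mp this.symm).resolve_left hne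
  rw [hz, sub_zero] at hrem
  exact hrem

theorem bracket_right_mem {n : ℕ} {v : L} (hv : v ∈ lcsF n) (u : L) : ⁅v, u⁆ ∈ lcsF (n + 1) := by
  rw [← lie_skew]
  exact Submodule.neg_mem _ (lcsF_succ_mem u hv)

theorem D_mem {n : ℕ} {a a' : L} (ha : a - a' ∈ lcsF n) (u : L) :
    ∀ j, (LieAlgebra.ad ℚ L a ^ j) u - (LieAlgebra.ad ℚ L a' ^ j) u ∈ lcsF (n + j) := by
  intro j
  induction j with
  | zero =>
    simp only [pow_zero, Module.End.one_apply, sub_self]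
    exact Submodule.zero_mem _
  | succ j ih =>
    have hrec : (LieAlgebra.ad ℚ L a ^ (j + 1)) u - (LieAlgebra.ad ℚ L a' ^ (j + 1)) u
        = ⁅a, (LieAlgebra.ad ℚ L a ^ j) u - (LieAlgebra.ad ℚ L a' ^ j) u⁆
          + ⁅a - a', (LieAlgebra.ad ℚ L a' ^ j) u⁆ := by
      rw [pow_succ', pow_succ', Module.End.mul_apply, Module.End.mul_apply,
        LieAlgebra.ad_apply, LieAlgebra.ad_apply, lie_sub, sub_lie]
      abel
    rw [hrec]
    refine Submodule.add_mem _ (lcsF_succ_mem a ih) ?_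
    have hadj : (LieAlgebra.ad ℚ L a' ^ j) u ∈ lcsF j := by
      clear ih hrec
      induction j with
      | zero => exact lcsF_zero_mem _
      | succ j ihj =>
        rw [pow_succ', Module.End.mul_apply, LieAlgebra.ad_apply]
        exact lcsF_succ_mem a' ihj
    have := lcsF_bracket n j (a - a') ((LieAlgebra.ad ℚ L a' ^ j) u) ha hadj
    rwa [show n + j + 1 = n + (j + 1) by omega] at this


theorem bracket_mem {n : ℕ} {a a' : L} (ha : a - a' ∈ lcsF n) (u : L)
    (hT : truncExpAd a u (n + 2) - truncExpAd a' u (n + 2) ∈ lcsF (n + 2)) :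
    ⁅a - a', u⁆ ∈ lcsF (n + 2) := by
  set f : ℕ → L := fun j => ((j.factorial : ℚ)⁻¹) •
    ((LieAlgebra.ad ℚ L a ^ j) u - (LieAlgebra.ad ℚ L a' ^ j) u) with hf
  have hsum : truncExpAd a u (n + 2) - truncExpAd a' u (n + 2)
      = ∑ j ∈ Finset.range (n + 3), f j := by
    rw [truncExpAd, truncExpAd, ← Finset.sum_sub_distrib]
    exact Finset.sum_congr rfl fun j _ => (smul_sub _ _ _).symm
  have hpeel : ∑ j ∈ Finset.range (n + 3), f j
      = (∑ j ∈ Finset.range (n + 1), f (j + 2)) + f 1 + f 0 := by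
    rw [Finset.sum_range_succ' f (n + 2), Finset.sum_range_succ' (fun i => f (i + 1)) (n + 1)]
  have hf0 : f 0 = 0 := by
    simp [hf]
  have hf1 : f 1 = ⁅a - a', u⁆ := by
    rw [hf]
    simp only [pow_one, LieAlgebra.ad_apply, Nat.factorial_one, Nat.cast_one, inv_one, one_smul]
    rw [sub_lie]
  have hrest : (∑ j ∈ Finset.range (n + 1), f (j + 2)) ∈ lcsF (n + 2) := by
    refine Submodule.sum_mem _ ?_
    intro j _
    refine Submodule.smul_mem _ _ ?_
    exact lcsF_antitone (by omega) (D_mem ha u (j + 2))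
  have : ⁅a - a', u⁆ = (truncExpAd a u (n + 2) - truncExpAd a' u (n + 2))
      - (∑ j ∈ Finset.range (n + 1), f (j + 2)) := by
    rw [hsum, hpeel, hf0, hf1]; abel
  rw [this]
  exact Submodule.sub_mem _ hT hrest

end BCHAux

/-- uniqueness of the Baker–Campbell–Hausdorff element.  Elements of
the degree completion `L̂` of the free Lie algebra `L` on `x = of 0`, `y = of 1` are
encoded as coherent sequences `z : ℕ → L` (coherent for the weight filtration).  If
two such elements `z, z'` both satisfy `exp(ad_z) = exp(ad_x) ∘ exp(ad_y)` as linear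
endomorphisms of `L̂` (expressed, equivalently, on the dense subalgebra `L` and modulo
each filtration stage, using the truncated exponentials), then `z = z'` in `L̂`. -/
theorem stmt4 (z z' : ℕ → FreeLieAlgebra ℚ (Fin 2))
    (hz : ∀ n, z (n + 1) - z n ∈ lcsF n)
    (hz' : ∀ n, z' (n + 1) - z' n ∈ lcsF n)
    (hzBCH : ∀ (u : FreeLieAlgebra ℚ (Fin 2)) (n : ℕ),
      truncExpAd (z n) u n
        - truncExpAd (FreeLieAlgebra.of ℚ (0 : Fin 2))
            (truncExpAd (FreeLieAlgebra.of ℚ (1 : Fin 2)) u n) n ∈ lcsF n)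
    (hz'BCH : ∀ (u : FreeLieAlgebra ℚ (Fin 2)) (n : ℕ),
      truncExpAd (z' n) u n
        - truncExpAd (FreeLieAlgebra.of ℚ (0 : Fin 2))
            (truncExpAd (FreeLieAlgebra.of ℚ (1 : Fin 2)) u n) n ∈ lcsF n) :
    ∀ n, z n - z' n ∈ lcsF n := by
  intro n
  induction n with
  | zero => exact BCHAux.lcsF_zero_mem _
  | succ n ihn =>
    have hd : z (n + 1) - z' (n + 1) ∈ lcsF n := by
      have e : z (n + 1) - z' (n + 1)
          = (z (n + 1) - z n) + (z n - z' n) - (z' (n + 1) - z' n) := by abel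
      rw [e]
      exact Submodule.sub_mem _ (Submodule.add_mem _ (hz n) ihn) (hz' n)
    refine BCHAux.key_lemma hd ?_
    intro i
    have hstep : z (n + 2) - z' (n + 2) - (z (n + 1) - z' (n + 1)) ∈ lcsF (n + 1) := by
      have e : z (n + 2) - z' (n + 2) - (z (n + 1) - z' (n + 1))
          = (z (n + 2) - z (n + 1)) - (z' (n + 2) - z' (n + 1)) := by abel
      rw [e]; exact Submodule.sub_mem _ (hz (n + 1)) (hz' (n + 1))
    have haa' : z (n + 2) - z' (n + 2) ∈ lcsF n := by
      have e : z (n + 2) - z' (n + 2)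
          = (z (n + 2) - z' (n + 2) - (z (n + 1) - z' (n + 1))) + (z (n + 1) - z' (n + 1)) := by
        abel
      rw [e]
      exact Submodule.add_mem _ (BCHAux.lcsF_antitone (by omega) hstep) hd
    have hT : truncExpAd (z (n + 2)) (FreeLieAlgebra.of ℚ i) (n + 2)
        - truncExpAd (z' (n + 2)) (FreeLieAlgebra.of ℚ i) (n + 2) ∈ lcsF (n + 2) := by
      have h1 := hzBCH (FreeLieAlgebra.of ℚ i) (n + 2)
      have h2 := hz'BCH (FreeLieAlgebra.of ℚ i) (n + 2)
      have h3 := Submodule.sub_mem _ h1 h2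
      rwa [sub_sub_sub_cancel_right] at h3
    have hbig := BCHAux.bracket_mem haa' (FreeLieAlgebra.of ℚ i) hT
    have e : ⁅z (n + 1) - z' (n + 1), FreeLieAlgebra.of ℚ i⁆
        = ⁅z (n + 2) - z' (n + 2), FreeLieAlgebra.of ℚ i⁆
          - ⁅z (n + 2) - z' (n + 2) - (z (n + 1) - z' (n + 1)), FreeLieAlgebra.of ℚ i⁆ := by
      rw [sub_lie (z (n + 2) - z' (n + 2)) (z (n + 1) - z' (n + 1))]
      abel
    rw [e]
    exact Submodule.sub_mem _ hbig (BCHAux.bracket_right_mem hstep _)
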